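/- Let 0 < η < π/3, a = e^{-iη}/(2cos η), c = 1/(1-|a|⁴), z_k = c a^{k+1}, w_k = 1 - c|a|²a^k, b₀ = a + c|a|⁴, and V = {b₀} ∪ {z_k : k ≥ 0} ∪ {w_k : k ≥ 1}. Then the convex hull co(V) is a polygon; more precisely, there exists n such that co(V) = co({b₀, z₀,…,z_n, w₁,…,w_n}). -/

import Mathlib

open Real Set

theorem mem3aux {s : Set ℂ} (hs : Convex ℝ s) {x y z' : ℂ} (hx : x ∈ s) (hy : y ∈ s) (hz : z' ∈ s)
    {p q t : ℝ} (hp : 0 ≤ p) (hq : 0 ≤ q) (ht : 0 ≤ t) (hsum : p + q + t = 1) :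
    (p : ℂ) * x + (q : ℂ) * y + (t : ℂ) * z' ∈ s := by
  have h := hs.sum_mem (t := (Finset.univ : Finset (Fin 3))) (w := ![p, q, t]) (z := ![x, y, z'])
    (by intro i _; fin_cases i <;> assumption)
    (by simp [Fin.sum_univ_three]; linarith)
    (by intro i _; fin_cases i <;> assumption)
  simpa [Fin.sum_univ_three, Complex.real_smul] using h

set_option maxHeartbeats 1000000 in
theorem stmt4 (η : ℝ) (hη0 : 0 < η) (hη1 : η < π / 3)
    (a : ℂ) (ha : a = Complex.exp (-(η : ℂ) * Complex.I) / (2 * Real.cos η))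
    (c : ℝ) (hc : c = 1 / (1 - ‖a‖ ^ 4))
    (z w : ℕ → ℂ) (hz : ∀ k, z k = (c : ℂ) * a ^ (k + 1))
    (hw : ∀ k, w k = 1 - (c : ℂ) * (‖a‖ : ℂ) ^ 2 * a ^ k)
    (b₀ : ℂ) (hb₀ : b₀ = a + (c : ℂ) * (‖a‖ : ℂ) ^ 4)
    (V : Set ℂ) (hV : V = {b₀} ∪ (z '' Set.univ) ∪ (w '' {k | 1 ≤ k})) :
    ∃ n : ℕ, convexHull ℝ V =
      convexHull ℝ ({b₀} ∪ (z '' {k | k ≤ n}) ∪ (w '' {k | 1 ≤ k ∧ k ≤ n})) := by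
  have hπ := Real.pi_pos
  have hco : (1/2 : ℝ) < Real.cos η := by
    have := Real.cos_lt_cos_of_nonneg_of_le_pi (x := η) (y := π/3) (le_of_lt hη0)
      (by linarith) hη1
    rwa [Real.cos_pi_div_three] at this
  have hcopos : (0:ℝ) < Real.cos η := by linarith
  set r : ℝ := 1 / (2 * Real.cos η) with hr_def
  have hrpos : 0 < r := by positivity
  have hr1 : r < 1 := by
    rw [hr_def, div_lt_one (by linarith)]; linarith
  have hspos : 0 < Real.sin η := Real.sin_pos_of_pos_of_lt_pi hη0 (by linarith)
  clear_value r
  -- powers of a in polar form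
  have hA : ∀ m : ℕ, a ^ m =
      ((r ^ m * Real.cos (m * η) : ℝ) : ℂ) - ((r ^ m * Real.sin (m * η) : ℝ) : ℂ) * Complex.I := by
    intro m
    have h1 : a = (r : ℂ) * Complex.exp (-(η:ℂ) * Complex.I) := by
      rw [ha, hr_def]; push_cast; ring
    rw [h1, mul_pow, ← Complex.exp_nat_mul]
    have h2 : (m : ℂ) * (-(η:ℂ) * Complex.I) = ((-(m * η) : ℝ) : ℂ) * Complex.I := by
      push_cast; ring
    rw [h2, Complex.exp_mul_I]
    rw [← Complex.ofReal_cos, ← Complex.ofReal_sin]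
    rw [Real.cos_neg, Real.sin_neg]
    push_cast; ring
  -- expression of a^m in the real basis {1, a}
  have hmain : ∀ m : ℕ, a ^ m =
      ((r ^ m * Real.sin (η - m * η) / Real.sin η : ℝ) : ℂ) +
      ((r ^ m * Real.sin (m * η) / (Real.sin η * r) : ℝ) : ℂ) * a := by
    intro m
    have ha1 : a = ((r * Real.cos η : ℝ) : ℂ) - ((r * Real.sin η : ℝ) : ℂ) * Complex.I := by
      have := hA 1; simpa using this
    rw [hA m, ha1]
    apply Complex.ext <;>
      simp only [Complex.add_re, Complex.add_im, Complex.sub_re, Complex.sub_im, Complex.mul_re,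
        Complex.mul_im, Complex.ofReal_re, Complex.ofReal_im, Complex.I_re, Complex.I_im]
    · rw [Real.sin_sub]; field_simp; nlinarith [Real.sin_sq_add_cos_sq η]
    · field_simp
      ring
  -- choice of p for the zero certificate
  set p : ℕ := ⌈(3*π - η)/η⌉₊ with hp_def
  have hp1 : 3*π - η ≤ (p:ℝ)*η := by
    have h := Nat.le_ceil ((3*π - η)/η)
    rw [div_le_iff₀ hη0, ← hp_def] at h
    linarith
  have hp2 : (p:ℝ)*η < 3*π := by
    have h := Nat.ceil_lt_add_one (show (0:ℝ) ≤ (3*π - η)/η by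
      apply div_nonneg <;> linarith)
    have h3 := mul_lt_mul_of_pos_right h hη0
    rw [add_mul, one_mul, div_mul_cancel₀ _ (ne_of_gt hη0)] at h3
    rw [← hp_def] at h3
    linarith
  clear_value p
  -- sin (p η) = sin (η - d') where d' = pη - (3π - η)
  have hsinp : Real.sin ((p:ℝ)*η) = Real.sin (η - ((p:ℝ)*η - (3*π - η))) := by
    have h := Real.sin_add_nat_mul_two_pi (π - (η - ((p:ℝ)*η - (3*π - η)))) 1
    rw [Real.sin_pi_sub] at h
    rw [← h]; congr 1; push_cast; ring
  have hsinp_pos : 0 < Real.sin ((p:ℝ)*η) := by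
    rw [hsinp]
    apply Real.sin_pos_of_pos_of_lt_pi <;> [linarith; linarith]
  have hsin2p : Real.sin (2*((p:ℝ)*η)) = -Real.sin (2*(η - ((p:ℝ)*η - (3*π - η)))) := by
    have h := Real.sin_nat_mul_two_pi_sub (2*(η - ((p:ℝ)*η - (3*π - η)))) 3
    rw [← h]; congr 1; push_cast; ring
  have hsin2p_nonpos : Real.sin (2*((p:ℝ)*η)) ≤ 0 := by
    rw [hsin2p, neg_nonpos]
    apply Real.sin_nonneg_of_nonneg_of_le_pi <;> [linarith; linarith]
  -- the certificate
  set μ₁ : ℝ := r ^ (3*p) * Real.sin (p*η) with hμ₁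
  set μ₂ : ℝ := -(r ^ (2*p) * Real.sin (2*(p*η))) with hμ₂
  set μ₃ : ℝ := r ^ p * Real.sin (p*η) with hμ₃
  have key0 : ((μ₁ : ℝ) : ℂ) + ((μ₂ : ℝ) : ℂ) * a ^ p + ((μ₃ : ℝ) : ℂ) * a ^ (2*p) = 0 := by
    rw [hμ₁, hμ₂, hμ₃, hA p, hA (2*p)]
    have h2 : ((2*p : ℕ) : ℝ) * η = 2*((p:ℝ)*η) := by push_cast; ring
    rw [h2, Real.sin_two_mul, Real.cos_two_mul]
    apply Complex.ext <;>
      simp only [Complex.add_re, Complex.add_im, Complex.sub_re, Complex.sub_im, Complex.mul_re,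
        Complex.mul_im, Complex.ofReal_re, Complex.ofReal_im, Complex.I_re, Complex.I_im,
        Complex.zero_re, Complex.zero_im] <;>
      ring
  have hμ₁pos : 0 < μ₁ := by rw [hμ₁]; exact mul_pos (pow_pos hrpos _) hsinp_pos
  have hμ₂nonneg : 0 ≤ μ₂ := by
    rw [hμ₂, neg_nonneg]
    exact mul_nonpos_of_nonneg_of_nonpos (pow_nonneg hrpos.le _) hsin2p_nonpos
  have hμ₃pos : 0 < μ₃ := by rw [hμ₃]; exact mul_pos (pow_pos hrpos _) hsinp_pos
  clear_value μ₁ μ₂ μ₃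
  set S : ℝ := μ₁ + μ₂ + μ₃ with hS
  have hSpos : 0 < S := by rw [hS]; linarith
  have hsum1 : μ₁/S + μ₂/S + μ₃/S = 1 := by
    rw [← add_div, ← add_div, ← hS, div_self (ne_of_gt hSpos)]
  clear_value S
  -- pick N for the size bound
  obtain ⟨N, hN⟩ := exists_pow_lt_of_lt_one (show (0:ℝ) < r/2 by linarith) hr1
  set L' : ℕ := ⌈2*π/η⌉₊ with hL'_def
  have hL : 2*π ≤ (L':ℝ)*η := by
    have h := Nat.le_ceil (2*π/η)
    rw [div_le_iff₀ hη0, ← hL'_def] at h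
    linarith
  clear_value L'
  refine ⟨N + L' + 2*p + 3, ?_⟩
  set n : ℕ := N + L' + 2*p + 3 with hn
  clear_value n
  set T : Set ℂ := convexHull ℝ ({b₀} ∪ (z '' {k | k ≤ n}) ∪ (w '' {k | 1 ≤ k ∧ k ≤ n})) with hT
  have hTconv : Convex ℝ T := convex_convexHull ℝ _
  have hzT : ∀ j : ℕ, j ≤ n → z j ∈ T := by
    intro j hj
    exact subset_convexHull ℝ _ (Or.inl (Or.inr ⟨j, hj, rfl⟩))
  have hwT : ∀ j : ℕ, 1 ≤ j → j ≤ n → w j ∈ T := by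
    intro j hj1 hj2
    exact subset_convexHull ℝ _ (Or.inr ⟨j, ⟨hj1, hj2⟩, rfl⟩)
  have hbT : b₀ ∈ T := subset_convexHull ℝ _ (Or.inl (Or.inl rfl))
  clear_value T
  -- 0 and 1 belong to T
  have h0 : (0:ℂ) ∈ T := by
    have heq0 : ((μ₁/S : ℝ) : ℂ) * z 1 + ((μ₂/S : ℝ) : ℂ) * z (1+p) +
        ((μ₃/S : ℝ) : ℂ) * z (1+2*p) = 0 := by
      rw [hz 1, hz (1+p), hz (1+2*p)]
      push_cast
      linear_combination ((c:ℂ) * a^2 / (S:ℂ)) * key0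
    rw [← heq0]
    exact mem3aux hTconv (hzT 1 (by omega)) (hzT (1+p) (by omega)) (hzT (1+2*p) (by omega))
      (div_nonneg hμ₁pos.le hSpos.le) (div_nonneg hμ₂nonneg hSpos.le)
      (div_nonneg hμ₃pos.le hSpos.le) hsum1
  have h1 : (1:ℂ) ∈ T := by
    have hSc : ((S:ℝ) : ℂ) = (μ₁ : ℝ) + (μ₂ : ℝ) + (μ₃ : ℝ) := by rw [hS]; push_cast; ring
    have heq1 : ((μ₁/S : ℝ) : ℂ) * w 1 + ((μ₂/S : ℝ) : ℂ) * w (1+p) +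
        ((μ₃/S : ℝ) : ℂ) * w (1+2*p) = 1 := by
      have hS0 : ((S:ℝ):ℂ) ≠ 0 := by
        simpa using (ne_of_gt hSpos)
      have hSinv : ((S:ℝ):ℂ) * ((S:ℝ):ℂ)⁻¹ = 1 := mul_inv_cancel₀ hS0
      rw [hw 1, hw (1+p), hw (1+2*p)]
      push_cast
      linear_combination (-(c:ℂ) * ((‖a‖ : ℝ) : ℂ)^2 * a / (S:ℂ)) * key0 -
        ((S:ℝ):ℂ)⁻¹ * hSc + hSinv
    rw [← heq1]
    exact mem3aux hTconv (hwT 1 (by omega) (by omega)) (hwT (1+p) (by omega) (by omega))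
      (hwT (1+2*p) (by omega) (by omega))
      (div_nonneg hμ₁pos.le hSpos.le) (div_nonneg hμ₂nonneg hSpos.le)
      (div_nonneg hμ₃pos.le hSpos.le) hsum1
  -- key decomposition for large indices
  have key : ∀ k : ℕ, n < k → ∃ j m : ℕ, k = j + m ∧ 1 ≤ j ∧ j + 1 ≤ n ∧
      0 ≤ r ^ m * Real.sin (η - m * η) / Real.sin η ∧
      0 ≤ r ^ m * Real.sin (m * η) / (Real.sin η * r) ∧
      r ^ m * Real.sin (η - m * η) / Real.sin η +
        r ^ m * Real.sin (m * η) / (Real.sin η * r) ≤ 1 := by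
    intro k hk
    set M : ℕ := max N (k + 1 - n) with hM
    set q : ℕ := ⌈(M:ℝ)*η/(2*π)⌉₊ with hq_def
    set m : ℕ := ⌈2*π*(q:ℝ)/η⌉₊ with hm_def
    clear_value M q m
    have f1 : (M:ℝ)*η ≤ 2*π*(q:ℝ) := by
      have h := Nat.le_ceil ((M:ℝ)*η/(2*π))
      rw [div_le_iff₀ (by positivity)] at h
      rw [← hq_def] at h
      linarith
    have f2 : 2*π*(q:ℝ) < (M:ℝ)*η + 2*π := by
      have h := Nat.ceil_lt_add_one (show (0:ℝ) ≤ (M:ℝ)*η/(2*π) by positivity)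
      have h3 := mul_lt_mul_of_pos_right h (show (0:ℝ) < 2*π by positivity)
      rw [add_mul, one_mul, div_mul_cancel₀ _ (show (2*π : ℝ) ≠ 0 by positivity)] at h3
      rw [← hq_def] at h3
      linarith
    have f3 : 2*π*(q:ℝ) ≤ (m:ℝ)*η := by
      have h := Nat.le_ceil (2*π*(q:ℝ)/η)
      rw [div_le_iff₀ hη0] at h
      rw [← hm_def] at h
      linarith
    have f4 : (m:ℝ)*η < 2*π*(q:ℝ) + η := by
      have h := Nat.ceil_lt_add_one (show (0:ℝ) ≤ 2*π*(q:ℝ)/η by positivity)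
      have h3 := mul_lt_mul_of_pos_right h hη0
      rw [add_mul, one_mul, div_mul_cancel₀ _ (ne_of_gt hη0)] at h3
      rw [← hm_def] at h3
      linarith
    have hMm : M ≤ m := by
      by_contra hcon
      push_neg at hcon
      have : (m:ℝ)*η < (M:ℝ)*η :=
        mul_lt_mul_of_pos_right (by exact_mod_cast hcon) hη0
      linarith
    have hmML : m ≤ M + L' := by
      by_contra hcon
      push_neg at hcon
      have hcast : ((M:ℝ) + (L':ℝ) + 1) * η ≤ (m:ℝ)*η := by
        apply mul_le_mul_of_nonneg_right _ hη0.le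
        have : (M + L' + 1 : ℕ) ≤ m := hcon
        exact_mod_cast this
      linarith
    have hNm : N ≤ m := by omega
    refine ⟨k - m, m, by omega, by omega, by omega, ?_, ?_, ?_⟩
    · -- 0 ≤ α
      have hsin2 : Real.sin (η - (m:ℝ)*η) = Real.sin (η - ((m:ℝ)*η - 2*π*(q:ℝ))) := by
        have h := Real.sin_add_int_mul_two_pi (η - ((m:ℝ)*η - 2*π*(q:ℝ))) (-(q:ℤ))
        rw [← h]; congr 1; push_cast; ring
      apply div_nonneg _ hspos.le
      apply mul_nonneg (pow_nonneg hrpos.le m)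
      rw [hsin2]
      apply Real.sin_nonneg_of_nonneg_of_le_pi <;> [linarith; linarith]
    · -- 0 ≤ β
      have hsin1 : Real.sin ((m:ℝ)*η) = Real.sin ((m:ℝ)*η - 2*π*(q:ℝ)) := by
        have h := Real.sin_add_nat_mul_two_pi ((m:ℝ)*η - 2*π*(q:ℝ)) q
        rw [← h]; congr 1; ring
      apply div_nonneg _ (mul_pos hspos hrpos).le
      apply mul_nonneg (pow_nonneg hrpos.le m)
      rw [hsin1]
      apply Real.sin_nonneg_of_nonneg_of_le_pi <;> [linarith; linarith]
    · -- α + β ≤ 1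
      have hsin1 : Real.sin ((m:ℝ)*η) = Real.sin ((m:ℝ)*η - 2*π*(q:ℝ)) := by
        have h := Real.sin_add_nat_mul_two_pi ((m:ℝ)*η - 2*π*(q:ℝ)) q
        rw [← h]; congr 1; ring
      have hsin2 : Real.sin (η - (m:ℝ)*η) = Real.sin (η - ((m:ℝ)*η - 2*π*(q:ℝ))) := by
        have h := Real.sin_add_int_mul_two_pi (η - ((m:ℝ)*η - 2*π*(q:ℝ))) (-(q:ℤ))
        rw [← h]; congr 1; push_cast; ring
      have hs1le : Real.sin ((m:ℝ)*η) ≤ Real.sin η := by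
        rw [hsin1]
        apply Real.sin_le_sin_of_le_of_le_pi_div_two <;> [linarith; linarith; linarith]
      have hs2le : Real.sin (η - (m:ℝ)*η) ≤ Real.sin η := by
        rw [hsin2]
        apply Real.sin_le_sin_of_le_of_le_pi_div_two <;> [linarith; linarith; linarith]
      have hrm : r ^ m * (1 + r) < r := by
        have h1' : r ^ m ≤ r ^ N := pow_le_pow_of_le_one hrpos.le hr1.le hNm
        nlinarith [pow_nonneg hrpos.le m]
      have hA_le : r ^ m * Real.sin (η - (m:ℝ)*η) / Real.sin η ≤ r ^ m := by
        rw [div_le_iff₀ hspos]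
        exact mul_le_mul_of_nonneg_left hs2le (pow_nonneg hrpos.le m)
      have hB_le : r ^ m * Real.sin ((m:ℝ)*η) / (Real.sin η * r) ≤ r ^ m / r := by
        rw [div_le_div_iff₀ (mul_pos hspos hrpos) hrpos]
        nlinarith [mul_le_mul_of_nonneg_right
          (mul_le_mul_of_nonneg_left hs1le (pow_nonneg hrpos.le m)) hrpos.le]
      have h5 : r ^ m * (1 + r) / r < 1 := (div_lt_one hrpos).mpr hrm
      have h6 : r ^ m + r ^ m / r = r ^ m * (1 + r) / r := by field_simp; ring
      linarith
  -- final assembly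
  apply Set.Subset.antisymm
  · apply convexHull_min _ hTconv
    rw [hV]
    rintro x ((rfl | ⟨k, -, rfl⟩) | ⟨k, hk1, rfl⟩)
    · exact hbT
    · by_cases hkn : k ≤ n
      · exact hzT k hkn
      · push_neg at hkn
        obtain ⟨j, m, hk, hj1, hjn, hα0, hβ0, hαβ⟩ := key k hkn
        have hm := hmain m
        have hzeq : ((r ^ m * Real.sin (η - m * η) / Real.sin η : ℝ) : ℂ) * z j +
            ((r ^ m * Real.sin (m * η) / (Real.sin η * r) : ℝ) : ℂ) * z (j+1) +
            ((1 - r ^ m * Real.sin (η - m * η) / Real.sin η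
               - r ^ m * Real.sin (m * η) / (Real.sin η * r) : ℝ) : ℂ) * 0 = z k := by
          rw [hz j, hz (j+1), hz k, hk]
          push_cast
          push_cast at hm
          linear_combination (-(c:ℂ) * a^(j+1)) * hm
        rw [← hzeq]
        exact mem3aux hTconv (hzT j (by omega)) (hzT (j+1) hjn) h0 hα0 hβ0
          (by linarith) (by ring)
    · by_cases hkn : k ≤ n
      · exact hwT k hk1 hkn
      · push_neg at hkn
        obtain ⟨j, m, hk, hj1, hjn, hα0, hβ0, hαβ⟩ := key k hkn
        have hm := hmain m
        have hweq : ((r ^ m * Real.sin (η - m * η) / Real.sin η : ℝ) : ℂ) * w j +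
            ((r ^ m * Real.sin (m * η) / (Real.sin η * r) : ℝ) : ℂ) * w (j+1) +
            ((1 - r ^ m * Real.sin (η - m * η) / Real.sin η
               - r ^ m * Real.sin (m * η) / (Real.sin η * r) : ℝ) : ℂ) * 1 = w k := by
          rw [hw j, hw (j+1), hw k, hk]
          push_cast
          push_cast at hm
          linear_combination ((c:ℂ) * ((‖a‖ : ℝ) : ℂ)^2 * a^j) * hm
        rw [← hweq]
        exact mem3aux hTconv (hwT j hj1 (by omega)) (hwT (j+1) (by omega) hjn) h1 hα0 hβ0
          (by linarith) (by ring)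
  · rw [hT]
    apply convexHull_mono
    rw [hV]
    rintro x ((rfl | ⟨k, -, rfl⟩) | ⟨k, hk, rfl⟩)
    · exact Or.inl (Or.inl rfl)
    · exact Or.inl (Or.inr ⟨k, trivial, rfl⟩)
    · exact Or.inr ⟨k, hk.1, rfl⟩
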